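/- Fix a complex n×t matrix A, z ∈ ℂ with Im z > 0, and indices a, p ∈ {1,…,n}, b ∈ {1,…,n}, q ∈ {1,…,t}. For X ∈ ℂ^{n×t} let H = A + X and Q(X) = (HH* − z I_n)⁻¹ (which exists for every X since HH* is Hermitian positive semidefinite and Im z > 0). Then the entry Q(X)_{a,b}, viewed as a smooth function of the real and imaginary parts of the entries of X, has Wirtinger derivatives ∂Q_{a,b}/∂X_{p,q} = − Q_{a,p} [H*Q]_{q,b} and ∂Q_{a,b}/∂X̄_{p,q} = − [QH]_{a,q} Q_{p,b}, where [H*Q] = H*Q and [QH] = QH. -/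

import Mathlib

open Matrix
open scoped Matrix.Norms.L2Operator

noncomputable section

/-- Wirtinger holomorphic derivative of `F` with respect to the `(p,q)` entry. -/
def mWirtinger {n t : ℕ} (F : Matrix (Fin n) (Fin t) ℂ → ℂ)
    (X : Matrix (Fin n) (Fin t) ℂ) (p : Fin n) (q : Fin t) : ℂ :=
  (1 / 2) * (fderiv ℝ F X (Matrix.single p q 1)
    - Complex.I * fderiv ℝ F X (Matrix.single p q Complex.I))

/-- Wirtinger antiholomorphic derivative of `F` with respect to the `(p,q)` entry. -/
def mWirtingerBar {n t : ℕ} (F : Matrix (Fin n) (Fin t) ℂ → ℂ)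
    (X : Matrix (Fin n) (Fin t) ℂ) (p : Fin n) (q : Fin t) : ℂ :=
  (1 / 2) * (fderiv ℝ F X (Matrix.single p q 1)
    + Complex.I * fderiv ℝ F X (Matrix.single p q Complex.I))

attribute [-instance] instTopologicalSpaceMatrix

lemma aux_isUnit {n t : ℕ} (H : Matrix (Fin n) (Fin t) ℂ) {z : ℂ} (hz : z.im ≠ 0) :
    IsUnit (H * Hᴴ - z • (1 : Matrix (Fin n) (Fin n) ℂ)) := by
  rw [Matrix.isUnit_iff_isUnit_det, isUnit_iff_ne_zero]
  intro hdet
  obtain ⟨v, hv, hveq⟩ := (Matrix.exists_mulVec_eq_zero_iff).2 hdet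
  have hmv : (H * Hᴴ) *ᵥ v = z • v := by
    have := hveq
    rw [Matrix.sub_mulVec, sub_eq_zero] at this
    rw [this, Matrix.smul_mulVec, Matrix.one_mulVec]
  set w : Fin t → ℂ := Hᴴ *ᵥ v with hw
  have key : z * (star v ⬝ᵥ v) = star w ⬝ᵥ w := by
    have h1 : star w ⬝ᵥ w = star v ⬝ᵥ ((H * Hᴴ) *ᵥ v) := by
      rw [hw, Matrix.star_mulVec, Matrix.conjTranspose_conjTranspose,
        ← Matrix.dotProduct_mulVec, Matrix.mulVec_mulVec]
    rw [h1, hmv, dotProduct_smul, smul_eq_mul]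
  have hvr : star v ⬝ᵥ v = ((∑ i, Complex.normSq (v i) : ℝ) : ℂ) := by
    simp [dotProduct, Pi.star_apply, Complex.star_def, Complex.normSq_eq_conj_mul_self]
  have hwr : star w ⬝ᵥ w = ((∑ i, Complex.normSq (w i) : ℝ) : ℂ) := by
    simp [dotProduct, Pi.star_apply, Complex.star_def, Complex.normSq_eq_conj_mul_self]
  have him : (z * (star v ⬝ᵥ v)).im = 0 := by rw [key, hwr]; simp
  rw [hvr] at him
  simp [Complex.mul_im] at him
  rcases him with h | h
  · exact hz h
  · apply hv
    funext i
    have := (Finset.sum_eq_zero_iff_of_nonneg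
      (fun j _ => Complex.normSq_nonneg (v j))).1 h i (Finset.mem_univ i)
    exact Complex.normSq_eq_zero.1 this

lemma fderiv_eval {n t : ℕ} (A : Matrix (Fin n) (Fin t) ℂ) {z : ℂ} (hz : z.im ≠ 0)
    (a b : Fin n) (X E : Matrix (Fin n) (Fin t) ℂ) :
    fderiv ℝ (fun Y => (((A + Y) * (A + Y)ᴴ - z • (1 : Matrix (Fin n) (Fin n) ℂ))⁻¹) a b) X E
      = -((((A + X) * (A + X)ᴴ - z • (1 : Matrix (Fin n) (Fin n) ℂ))⁻¹
          * (E * (A + X)ᴴ + (A + X) * Eᴴ)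
          * (((A + X) * (A + X)ᴴ - z • (1 : Matrix (Fin n) (Fin n) ℂ))⁻¹)) a b) := by
  set M : Matrix (Fin n) (Fin t) ℂ → Matrix (Fin n) (Fin n) ℂ :=
    fun Y => (A + Y) * (A + Y)ᴴ - z • (1 : Matrix (Fin n) (Fin n) ℂ) with hMdef
  set H : Matrix (Fin n) (Fin t) ℂ := A + X with hH
  set Llin : Matrix (Fin n) (Fin t) ℂ →ₗ[ℝ] Matrix (Fin n) (Fin n) ℂ :=
    { toFun := fun W => W * Hᴴ + H * Wᴴ
      map_add' := fun W₁ W₂ => by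
        simp [Matrix.conjTranspose_add, Matrix.add_mul, Matrix.mul_add]; abel
      map_smul' := fun c W => by
        have : (c • W)ᴴ = c • Wᴴ := by
          ext i j; simp [Matrix.conjTranspose_apply]
        simp [this, Matrix.smul_mul, Matrix.mul_smul, smul_add] } with hLlin
  have hM : HasFDerivAt M (LinearMap.toContinuousLinearMap Llin) X := by
    rw [hasFDerivAt_iff_isLittleO_nhds_zero]
    have heq : (fun h : Matrix (Fin n) (Fin t) ℂ =>
        M (X + h) - M X - LinearMap.toContinuousLinearMap Llin h)
        = fun h => h * hᴴ := by
      funext h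
      show ((A + (X + h)) * (A + (X + h))ᴴ - z • 1) - ((A + X) * (A + X)ᴴ - z • 1)
        - (h * Hᴴ + H * hᴴ) = h * hᴴ
      rw [show A + (X + h) = H + h by rw [hH]; abel,
        Matrix.conjTranspose_add, Matrix.add_mul, Matrix.mul_add, Matrix.mul_add]
      abel
    rw [heq]
    have hbig : (fun h : Matrix (Fin n) (Fin t) ℂ => h * hᴴ)
        =O[nhds 0] (fun h => ‖h‖ ^ 2) := by
      apply Asymptotics.IsBigO.of_bound 1
      filter_upwards with h
      calc ‖h * hᴴ‖ ≤ ‖h‖ * ‖hᴴ‖ := Matrix.l2_opNorm_mul h hᴴ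
        _ = ‖h‖ ^ 2 := by rw [Matrix.l2_opNorm_conjTranspose]; ring
        _ ≤ 1 * ‖‖h‖ ^ 2‖ := by rw [one_mul, Real.norm_of_nonneg (sq_nonneg _)]
    exact hbig.trans_isLittleO (Asymptotics.isLittleO_norm_pow_id one_lt_two)
  set u : (Matrix (Fin n) (Fin n) ℂ)ˣ := (aux_isUnit (A + X) hz).unit with hudef
  have huspec : (u : Matrix (Fin n) (Fin n) ℂ) = M X := (aux_isUnit (A + X) hz).unit_spec
  have hinv0 : HasFDerivAt (Ring.inverse : Matrix (Fin n) (Fin n) ℂ → _)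
      (-(ContinuousLinearMap.mulLeftRight ℝ _ ↑u⁻¹ ↑u⁻¹)) (M X) :=
    huspec ▸ hasFDerivAt_ringInverse u
  have hinv : HasFDerivAt (fun Y => Ring.inverse (M Y))
      ((-(ContinuousLinearMap.mulLeftRight ℝ _ ↑u⁻¹ ↑u⁻¹)).comp
        (LinearMap.toContinuousLinearMap Llin)) X := hinv0.comp X hM
  set eL : Matrix (Fin n) (Fin n) ℂ →L[ℝ] ℂ :=
    LinearMap.toContinuousLinearMap (Matrix.entryLinearMap ℝ ℂ a b) with heL
  have he : HasFDerivAt (fun W : Matrix (Fin n) (Fin n) ℂ => W a b) eL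
      (Ring.inverse (M X)) := eL.hasFDerivAt
  have hfull : HasFDerivAt (fun Y => (Ring.inverse (M Y)) a b)
      (eL.comp ((-(ContinuousLinearMap.mulLeftRight ℝ _ ↑u⁻¹ ↑u⁻¹)).comp
        (LinearMap.toContinuousLinearMap Llin))) X := by
    have := he.comp X hinv; exact this
  have hQ : ((u⁻¹ : (Matrix (Fin n) (Fin n) ℂ)ˣ) : Matrix (Fin n) (Fin n) ℂ) = (M X)⁻¹ := by
    rw [Matrix.nonsing_inv_eq_ringInverse, ← huspec, Ring.inverse_unit]
  have hgoalfun : (fun Y => (((A + Y) * (A + Y)ᴴ - z • (1 : Matrix (Fin n) (Fin n) ℂ))⁻¹) a b)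
      = fun Y => (Ring.inverse (M Y)) a b := by
    funext Y; rw [Matrix.nonsing_inv_eq_ringInverse]
  rw [hgoalfun, hfull.fderiv]
  simp only [ContinuousLinearMap.comp_apply, ContinuousLinearMap.neg_apply,
    ContinuousLinearMap.mulLeftRight_apply, hQ,
    LinearMap.coe_toContinuousLinearMap', LinearMap.coe_mk, AddHom.coe_mk]
  show -(((M X)⁻¹ * (E * Hᴴ + H * Eᴴ) * (M X)⁻¹) a b) = _
  rw [hMdef, hH]

lemma stdBasis_sandwich {k l m o : ℕ} (P : Matrix (Fin k) (Fin l) ℂ) (B : Matrix (Fin m) (Fin o) ℂ)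
    (i : Fin l) (j : Fin m) (c : ℂ) (a : Fin k) (b : Fin o) :
    (P * (Matrix.single i j c * B)) a b = P a i * (c * B j b) := by
  have h1 : ∀ x, (Matrix.single i j c * B) x b
      = if x = i then c * B j b else 0 := by
    intro x
    simp [Matrix.mul_apply, Matrix.single, ite_and, eq_comm]
  simp [Matrix.mul_apply, h1, mul_ite]

lemma stdBasis_ct {k l : ℕ} (i : Fin k) (j : Fin l) (c : ℂ) :
    (Matrix.single i j c)ᴴ = Matrix.single j i (star c) := by
  ext x y
  simp only [Matrix.conjTranspose_apply, Matrix.single, Matrix.of_apply]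
  rw [apply_ite star, star_zero]
  congr 1
  by_cases h1 : i = y <;> by_cases h2 : j = x <;> simp [h1, h2]

lemma entry_formula {n t : ℕ} (Q : Matrix (Fin n) (Fin n) ℂ) (H : Matrix (Fin n) (Fin t) ℂ)
    (p a b : Fin n) (q : Fin t) (c₁ c₂ : ℂ) :
    (Q * (Matrix.single p q c₁ * Hᴴ + H * Matrix.single q p c₂) * Q) a b
      = Q a p * (c₁ * (Hᴴ * Q) q b) + (Q * H) a q * (c₂ * Q p b) := by
  rw [Matrix.mul_add, Matrix.add_mul, Matrix.add_apply]
  congr 1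
  · rw [Matrix.mul_assoc Q _ Q, Matrix.mul_assoc _ Hᴴ Q]
    exact stdBasis_sandwich Q (Hᴴ * Q) p q c₁ a b
  · rw [← Matrix.mul_assoc Q H _, Matrix.mul_assoc (Q * H) _ Q]
    exact stdBasis_sandwich (Q * H) Q q p c₂ a b

theorem resolvent_entry_wirtinger_derivatives
    (n t : ℕ) (A : Matrix (Fin n) (Fin t) ℂ) (z : ℂ) (hz : 0 < z.im)
    (a b p : Fin n) (q : Fin t) :
    ∀ X : Matrix (Fin n) (Fin t) ℂ,
      mWirtinger
          (fun Y => (((A + Y) * (A + Y)ᴴ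
            - z • (1 : Matrix (Fin n) (Fin n) ℂ))⁻¹) a b) X p q
        = -(((A + X) * (A + X)ᴴ - z • (1 : Matrix (Fin n) (Fin n) ℂ))⁻¹ a p)
            * (((A + X)ᴴ
              * ((A + X) * (A + X)ᴴ - z • (1 : Matrix (Fin n) (Fin n) ℂ))⁻¹) q b) ∧
      mWirtingerBar
          (fun Y => (((A + Y) * (A + Y)ᴴ
            - z • (1 : Matrix (Fin n) (Fin n) ℂ))⁻¹) a b) X p q
        = -((((A + X) * (A + X)ᴴ - z • (1 : Matrix (Fin n) (Fin n) ℂ))⁻¹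
              * (A + X)) a q)
            * (((A + X) * (A + X)ᴴ - z • (1 : Matrix (Fin n) (Fin n) ℂ))⁻¹ p b) := by
  intro X
  have hz' : z.im ≠ 0 := ne_of_gt hz
  have hD1 := fderiv_eval A hz' a b X (Matrix.single p q 1)
  have hD2 := fderiv_eval A hz' a b X (Matrix.single p q Complex.I)
  rw [stdBasis_ct, star_one] at hD1
  rw [stdBasis_ct, Complex.star_def, Complex.conj_I] at hD2
  rw [entry_formula] at hD1 hD2
  set Q : Matrix (Fin n) (Fin n) ℂ :=
    ((A + X) * (A + X)ᴴ - z • (1 : Matrix (Fin n) (Fin n) ℂ))⁻¹ with hQ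
  constructor
  · rw [mWirtinger, hD1, hD2]
    ring_nf
    simp only [Complex.I_sq]
    ring_nf
  · rw [mWirtingerBar, hD1, hD2]
    ring_nf
    simp only [Complex.I_sq]
    ring_nf

end
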